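/- If w, w' ∈ S_n are conjugate words (w = xy, w' = yx), then V_0(w) = V_0(w'), where V_0(w) is defined by v_{ij} = −γ_{ij}(w) + Σ_{i≤k<j} γ_{k,k+1}(w). -/

import Mathlib

/-- `gamma w i j = 1` if `j` appears before `i` in the word `w`, else `0`. -/
def gamma (w : List ℕ) (i j : ℕ) : ℤ := if w.idxOf j < w.idxOf i then 1 else 0

/-- The vector `V₀(w)`, with `v_{ij} = −γ_{ij}(w) + Σ_{i≤k<j} γ_{k,k+1}(w)`. -/
def V0 (w : List ℕ) (i j : ℕ) : ℤ :=
  - gamma w i j + ∑ k ∈ Finset.Ico i j, gamma w k (k + 1)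

private lemma gamma_rot {x y : List ℕ} (hnd : (x ++ y).Nodup) {i j : ℕ}
    (hi : i ∈ x ++ y) (hj : j ∈ x ++ y) :
    gamma (y ++ x) i j =
      gamma (x ++ y) i j + ((if i ∈ x then (1:ℤ) else 0) - (if j ∈ x then 1 else 0)) := by
  have hdisj := List.disjoint_of_nodup_append hnd
  rcases List.mem_append.1 hi with hix | hiy <;> rcases List.mem_append.1 hj with hjx | hjy
  · have hiy : i ∉ y := fun h => hdisj hix h
    have hjy : j ∉ y := fun h => hdisj hjx h
    simp only [gamma, List.idxOf_append_of_mem hix, List.idxOf_append_of_mem hjx,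
      List.idxOf_append_of_notMem hiy, List.idxOf_append_of_notMem hjy, hix, hjx,
      if_pos, add_lt_add_iff_left]
    ring
  · have hjx' : j ∉ x := fun h => hdisj h hjy
    have hiy : i ∉ y := fun h => hdisj hix h
    have h1 : gamma (x ++ y) i j = 0 := by
      have hl := List.idxOf_lt_length_iff.2 hix
      simp only [gamma, List.idxOf_append_of_mem hix, List.idxOf_append_of_notMem hjx']
      rw [if_neg (by omega)]
    have h2 : gamma (y ++ x) i j = 1 := by
      have hl := List.idxOf_lt_length_iff.2 hjy
      simp only [gamma, List.idxOf_append_of_mem hjy, List.idxOf_append_of_notMem hiy]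
      rw [if_pos (by omega)]
    rw [h1, h2, if_pos hix, if_neg hjx']; ring
  · have hix' : i ∉ x := fun h => hdisj h hiy
    have hjy : j ∉ y := fun h => hdisj hjx h
    have h1 : gamma (x ++ y) i j = 1 := by
      have hl := List.idxOf_lt_length_iff.2 hjx
      simp only [gamma, List.idxOf_append_of_mem hjx, List.idxOf_append_of_notMem hix']
      rw [if_pos (by omega)]
    have h2 : gamma (y ++ x) i j = 0 := by
      have hl := List.idxOf_lt_length_iff.2 hiy
      simp only [gamma, List.idxOf_append_of_mem hiy, List.idxOf_append_of_notMem hjy]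
      rw [if_neg (by omega)]
    rw [h1, h2, if_neg hix', if_pos hjx]; ring
  · have hix' : i ∉ x := fun h => hdisj h hiy
    have hjx' : j ∉ x := fun h => hdisj h hjy
    simp only [gamma, List.idxOf_append_of_mem hiy, List.idxOf_append_of_mem hjy,
      List.idxOf_append_of_notMem hix', List.idxOf_append_of_notMem hjx',
      add_lt_add_iff_left, hix', hjx', if_neg, not_false_iff]
    ring

private lemma telescope (f : ℕ → ℤ) (i j : ℕ) (h : i ≤ j) :
    ∑ k ∈ Finset.Ico i j, (f k - f (k + 1)) = f i - f j := by
  induction j with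
  | zero => interval_cases i; simp
  | succ m ih =>
    rcases Nat.lt_or_ge i (m + 1) with h' | h'
    · have him : i ≤ m := Nat.lt_succ_iff.1 h'
      rw [Finset.sum_Ico_succ_top him, ih him]; ring
    · have : i = m + 1 := le_antisymm h h'
      subst this; simp

theorem V0_conjugation_invariant (n : ℕ) (x y : List ℕ)
    (hperm : (x ++ y).Perm (List.range' 1 n)) :
    ∀ i j, 1 ≤ i → i < j → j ≤ n → V0 (x ++ y) i j = V0 (y ++ x) i j := by
  intro i j h1 hij hjn
  have hnd : (x ++ y).Nodup := hperm.nodup_iff.2 (List.nodup_range' ..)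
  have hmem : ∀ m, 1 ≤ m → m ≤ n → m ∈ x ++ y := by
    intro m hm1 hmn
    rw [hperm.mem_iff, List.mem_range']
    exact ⟨m - 1, by omega, by omega⟩
  set χ : ℕ → ℤ := fun a => if a ∈ x then (1:ℤ) else 0 with hχ
  have hgij : gamma (y ++ x) i j = gamma (x ++ y) i j + (χ i - χ j) :=
    gamma_rot hnd (hmem i h1 (by omega)) (hmem j (by omega) hjn)
  have hsum : ∑ k ∈ Finset.Ico i j, gamma (y ++ x) k (k + 1) =
      ∑ k ∈ Finset.Ico i j, (gamma (x ++ y) k (k + 1) + (χ k - χ (k + 1))) := by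
    refine Finset.sum_congr rfl fun k hk => ?_
    rw [Finset.mem_Ico] at hk
    exact gamma_rot hnd (hmem k (by omega) (by omega)) (hmem (k + 1) (by omega) (by omega))
  unfold V0
  rw [hgij, hsum, Finset.sum_add_distrib, telescope χ i j (le_of_lt hij)]
  ring
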